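/- Let L be positive semi-definite and block tridiagonal with respect to Y_1, ..., Y_m, and let Ĉ_1, ..., Ĉ_m be the output of the sequential procedure that at step i exactly maximizes det(L̃_{C_i}) over C_i ⊆ Y_i given the previously fixed Ĉ_1, ..., Ĉ_{i-1} (with L̃ defined by the Schur-complement recursion). Then det(L_{Ĉ_1 ∪ ... ∪ Ĉ_m}) = ∏_{i=1}^m max_{C_i ⊆ Y_i} det((L̃_{Y_i})_{C_i}), where L̃_{Y_1} = L_{Y_1} and L̃_{Y_i} = L_{Y_i} − (L_{Ĉ_{i-1},Y_i})^T (L̃_{Ĉ_{i-1}})^{-1} L_{Ĉ_{i-1},Y_i}. -/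

import Mathlib

open Matrix

/-- Principal/rectangular submatrix of `L` with rows indexed by `A` and columns by `B`. -/
def subm {N : ℕ} (L : Matrix (Fin N) (Fin N) ℝ) (A B : Finset (Fin N)) :
    Matrix A B ℝ := Matrix.of fun i j => L i.1 j.1

/-- Principal submatrix of a matrix indexed by `A`, restricted to `B ⊆ A`. -/
def subm2 {N : ℕ} {A B : Finset (Fin N)} (M : Matrix A A ℝ) (h : B ⊆ A) :
    Matrix B B ℝ := Matrix.of fun i j => M ⟨i.1, h i.2⟩ ⟨j.1, h j.2⟩

def unionEquiv {α : Type*} [DecidableEq α] (s t : Finset α) (hd : Disjoint s t) :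
    ↥(s ∪ t) ≃ ↥s ⊕ ↥t where
  toFun x := if h : x.1 ∈ s then Sum.inl ⟨x.1, h⟩ else
    Sum.inr ⟨x.1, (Finset.mem_union.mp x.2).resolve_left h⟩
  invFun y := Sum.elim (fun a => ⟨a.1, Finset.mem_union_left _ a.2⟩)
    (fun b => ⟨b.1, Finset.mem_union_right _ b.2⟩) y
  left_inv x := by by_cases h : x.1 ∈ s <;> simp [h]
  right_inv y := by
    rcases y with a | b
    · simp
    · have hb : b.1 ∉ s := fun h => Finset.disjoint_left.mp hd h b.2
      simp [hb]

lemma unionEquiv_inr {α : Type*} [DecidableEq α] (s t : Finset α) (hd : Disjoint s t)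
    (b : α) (hb : b ∈ t) (hb' : b ∈ s ∪ t) :
    unionEquiv s t hd ⟨b, hb'⟩ = Sum.inr ⟨b, hb⟩ := by
  have hbs : b ∉ s := fun h => Finset.disjoint_left.mp hd h hb
  simp [unionEquiv, hbs]

lemma sum_restrict {α : Type*} [DecidableEq α] {s t : Finset α} (h : t ⊆ s)
    (f : ↥s → ℝ) (h0 : ∀ u : ↥s, u.1 ∉ t → f u = 0) :
    ∑ u : ↥s, f u = ∑ v : ↥t, f ⟨v.1, h v.2⟩ := by
  classical
  have h1 : ∑ u : ↥s, f u = ∑ x ∈ s, (fun a => if ha : a ∈ s then f ⟨a, ha⟩ else 0) x := by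
    rw [Finset.univ_eq_attach, ← Finset.sum_attach s (fun a => if ha : a ∈ s then f ⟨a, ha⟩ else 0)]
    exact Finset.sum_congr rfl (fun x _ => by rw [dif_pos x.2])
  have h2 : ∑ v : ↥t, f ⟨v.1, h v.2⟩
      = ∑ x ∈ t, (fun a => if ha : a ∈ s then f ⟨a, ha⟩ else 0) x := by
    rw [Finset.univ_eq_attach, ← Finset.sum_attach t (fun a => if ha : a ∈ s then f ⟨a, ha⟩ else 0)]
    exact Finset.sum_congr rfl (fun x _ => by rw [dif_pos (h x.2)])
  rw [h1, h2]
  refine (Finset.sum_subset h ?_).symm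
  intro x hxs hxt
  rw [dif_pos hxs]
  exact h0 ⟨x, hxs⟩ hxt

lemma subm_union_eq {N : ℕ} (L : Matrix (Fin N) (Fin N) ℝ) (s t : Finset (Fin N))
    (hd : Disjoint s t) :
    subm L (s ∪ t) (s ∪ t) =
      (fromBlocks (subm L s s) (subm L s t) (subm L t s) (subm L t t)).submatrix
        (unionEquiv s t hd) (unionEquiv s t hd) := by
  ext x y
  simp only [submatrix_apply, subm, of_apply, unionEquiv, Equiv.coe_fn_mk]
  by_cases hx : x.1 ∈ s <;> by_cases hy : y.1 ∈ s <;> simp [hx, hy]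

/-- If `Ĉ_1,…,Ĉ_m` are obtained by exactly maximizing `det(L̃_{C_i})` over
`C_i ⊆ Y_i` at each step of the BwDPP-MAP Schur-complement recursion, then
`det(L_{Ĉ_1 ∪ ⋯ ∪ Ĉ_m}) = ∏ᵢ max_{C_i ⊆ Y_i} det((L̃_{Y_i})_{C_i})`. -/
theorem stmt15 {N m : ℕ} (L : Matrix (Fin N) (Fin N) ℝ) (hL : L.PosSemidef)
    (Y : ℕ → Finset (Fin N))
    (hdisj : ∀ i < m, ∀ j < m, i ≠ j → Disjoint (Y i) (Y j))
    (hcover : (Finset.range m).biUnion Y = Finset.univ)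
    (htri : ∀ i < m, ∀ j < m, i + 2 ≤ j →
      ∀ a ∈ Y i, ∀ b ∈ Y j, L a b = 0 ∧ L b a = 0)
    (Ci : ℕ → Finset (Fin N)) (hCi : ∀ i, Ci i ⊆ Y i)
    (Lt : (i : ℕ) → Matrix (Y i) (Y i) ℝ)
    (hLt0 : Lt 0 = subm L (Y 0) (Y 0))
    (hLtS : ∀ i, 0 < i → i < m →
      Lt i = subm L (Y i) (Y i)
        - (subm L (Ci (i - 1)) (Y i))ᵀ * (subm2 (Lt (i - 1)) (hCi (i - 1)))⁻¹
            * subm L (Ci (i - 1)) (Y i))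
    (hinv : ∀ i < m, IsUnit (subm2 (Lt i) (hCi i)).det)
    (hmax : ∀ i < m, ∀ S : Finset (Fin N), ∀ hS : S ⊆ Y i,
      (subm2 (Lt i) hS).det ≤ (subm2 (Lt i) (hCi i)).det) :
    (subm L ((Finset.range m).biUnion Ci) ((Finset.range m).biUnion Ci)).det
      = ∏ i ∈ Finset.range m,
          ((Y i).powerset.attach.sup'
            (Finset.attach_nonempty_iff.mpr ((Y i).powerset_nonempty))
            (fun S => (subm2 (Lt i) (Finset.mem_powerset.mp S.2)).det)) := by
  classical
  have hsymm : ∀ a b : Fin N, L a b = L b a := by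
    intro a b
    have := congrFun (congrFun hL.1 a) b
    simpa using this.symm
  -- the key induction
  have key : ∀ k, k ≤ m →
      ((subm L ((Finset.range k).biUnion Ci) ((Finset.range k).biUnion Ci)).det
          = ∏ i ∈ Finset.range k, (subm2 (Lt i) (hCi i)).det) ∧
        (0 < k → ∀ (c c' : ↥(Ci (k-1)))
          (x y : ↥((Finset.range k).biUnion Ci)), x.1 = c.1 → y.1 = c'.1 →
          (subm L ((Finset.range k).biUnion Ci) ((Finset.range k).biUnion Ci))⁻¹ x y
            = (subm2 (Lt (k-1)) (hCi (k-1)))⁻¹ c c') := by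
    intro k
    induction k with
    | zero =>
      intro _
      constructor
      · haveI : IsEmpty ↥((Finset.range 0).biUnion Ci) :=
          Finset.isEmpty_coe_sort.mpr (by simp)
        rw [Matrix.det_isEmpty]; simp
      · intro hk
        exact absurd hk (by omega)
    | succ k IH =>
      intro hk1
      have hkm : k < m := by omega
      have IHp := IH (by omega)
      have hd : Disjoint ((Finset.range k).biUnion Ci) (Ci k) := by
        rw [Finset.disjoint_left]
        intro x hx hxk
        obtain ⟨j, hj, hxj⟩ := Finset.mem_biUnion.mp hx
        rw [Finset.mem_range] at hj
        exact Finset.disjoint_left.mp (hdisj j (by omega) k hkm (by omega))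
          (hCi j hxj) (hCi k hxk)
      have hU : (Finset.range (k+1)).biUnion Ci = (Finset.range k).biUnion Ci ∪ Ci k := by
        rw [Finset.range_add_one, Finset.biUnion_insert, Finset.union_comm]
      have hAunit : IsUnit (subm L ((Finset.range k).biUnion Ci)
          ((Finset.range k).biUnion Ci)).det := by
        rw [IHp.1, isUnit_iff_ne_zero, Finset.prod_ne_zero_iff]
        intro i hi
        exact (hinv i (by have := Finset.mem_range.mp hi; omega)).ne_zero
      haveI iA : Invertible (subm L ((Finset.range k).biUnion Ci)
          ((Finset.range k).biUnion Ci)) :=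
        Matrix.invertibleOfIsUnitDet _ hAunit
      have hS : subm L (Ci k) (Ci k)
          - subm L (Ci k) ((Finset.range k).biUnion Ci)
            * (subm L ((Finset.range k).biUnion Ci) ((Finset.range k).biUnion Ci))⁻¹
            * subm L ((Finset.range k).biUnion Ci) (Ci k)
          = subm2 (Lt k) (hCi k) := by
        rcases Nat.eq_zero_or_pos k with hk0 | hk0
        · haveI : IsEmpty ↥((Finset.range k).biUnion Ci) :=
            Finset.isEmpty_coe_sort.mpr (by rw [hk0]; simp)
          have hLtk : Lt k = subm L (Y k) (Y k) := by rw [hk0]; exact hLt0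
          ext v v'
          simp [Matrix.sub_apply, Matrix.mul_apply, subm, subm2, hLtk]
        · have hLtk := hLtS k hk0 hkm
          have hsub : Ci (k-1) ⊆ (Finset.range k).biUnion Ci :=
            fun x hx => Finset.mem_biUnion.mpr ⟨k-1, Finset.mem_range.mpr (by omega), hx⟩
          have hz : ∀ (vv : ↥(Ci k)) (u : ↥((Finset.range k).biUnion Ci)),
              u.1 ∉ Ci (k-1) → L u.1 vv.1 = 0 ∧ L vv.1 u.1 = 0 := by
            intro vv u hu
            obtain ⟨i₀, hi₀, hui₀⟩ := Finset.mem_biUnion.mp u.2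
            rw [Finset.mem_range] at hi₀
            have hne : i₀ ≠ k - 1 := fun h => hu (h ▸ hui₀)
            exact htri i₀ (by omega) k hkm (by omega) u.1 (hCi i₀ hui₀) vv.1 (hCi k vv.2)
          ext v v'
          rw [hLtk]
          simp only [subm2, subm, Matrix.sub_apply, Matrix.mul_apply, Matrix.of_apply,
            Matrix.transpose_apply]
          congr 1
          have step1 : (∑ x : ↥((Finset.range k).biUnion Ci),
                (∑ x1 : ↥((Finset.range k).biUnion Ci), L v.1 x1.1 *
                  (subm L ((Finset.range k).biUnion Ci) ((Finset.range k).biUnion Ci))⁻¹ x1 x)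
                  * L x.1 v'.1)
              = ∑ c' : ↥(Ci (k-1)),
                (∑ x1 : ↥((Finset.range k).biUnion Ci), L v.1 x1.1 *
                  (subm L ((Finset.range k).biUnion Ci) ((Finset.range k).biUnion Ci))⁻¹ x1
                    ⟨c'.1, hsub c'.2⟩)
                  * L c'.1 v'.1 :=
            sum_restrict hsub _ (fun u hu => by simp only [(hz v' u hu).1, mul_zero])
          have step2 : ∀ c' : ↥(Ci (k-1)),
              (∑ x1 : ↥((Finset.range k).biUnion Ci), L v.1 x1.1 *
                (subm L ((Finset.range k).biUnion Ci) ((Finset.range k).biUnion Ci))⁻¹ x1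
                  ⟨c'.1, hsub c'.2⟩)
              = ∑ c : ↥(Ci (k-1)), L c.1 v.1 * (subm2 (Lt (k-1)) (hCi (k-1)))⁻¹ c c' := by
            intro c'
            rw [sum_restrict hsub (fun x1 => L v.1 x1.1 *
              (subm L ((Finset.range k).biUnion Ci) ((Finset.range k).biUnion Ci))⁻¹ x1
                ⟨c'.1, hsub c'.2⟩) (fun u hu => by simp only [(hz v u hu).2, zero_mul])]
            refine Finset.sum_congr rfl (fun c _ => ?_)
            rw [IHp.2 hk0 c c' ⟨c.1, hsub c.2⟩ ⟨c'.1, hsub c'.2⟩ rfl rfl, hsymm v.1 c.1]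
          exact step1.trans (Finset.sum_congr rfl (fun c' _ => by rw [step2 c']; rfl))
      constructor
      · rw [hU, subm_union_eq L _ _ hd, Matrix.det_submatrix_equiv_self,
          Matrix.det_fromBlocks₁₁, invOf_eq_nonsing_inv, hS, IHp.1, Finset.prod_range_succ]
      · intro hk' c c'
        rw [hU]
        intro x y hx hy
        haveI iS : Invertible (subm2 (Lt k) (hCi k)) :=
          Matrix.invertibleOfIsUnitDet _ (hinv k hkm)
        have hS' : subm L (Ci k) (Ci k)
            - subm L (Ci k) ((Finset.range k).biUnion Ci)
              * ⅟(subm L ((Finset.range k).biUnion Ci) ((Finset.range k).biUnion Ci))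
              * subm L ((Finset.range k).biUnion Ci) (Ci k)
            = subm2 (Lt k) (hCi k) := by
          rw [invOf_eq_nonsing_inv]; exact hS
        haveI iS' : Invertible (subm L (Ci k) (Ci k)
            - subm L (Ci k) ((Finset.range k).biUnion Ci)
              * ⅟(subm L ((Finset.range k).biUnion Ci) ((Finset.range k).biUnion Ci))
              * subm L ((Finset.range k).biUnion Ci) (Ci k)) := iS.copy _ hS'
        haveI iF : Invertible (fromBlocks
            (subm L ((Finset.range k).biUnion Ci) ((Finset.range k).biUnion Ci))
            (subm L ((Finset.range k).biUnion Ci) (Ci k))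
            (subm L (Ci k) ((Finset.range k).biUnion Ci))
            (subm L (Ci k) (Ci k))) := Matrix.fromBlocks₁₁Invertible _ _ _ _
        have hex : unionEquiv _ _ hd x = Sum.inr c := by
          obtain ⟨x1, hx2⟩ := x
          obtain ⟨c1, hc2⟩ := c
          simp only at hx
          subst hx
          exact unionEquiv_inr _ _ hd x1 hc2 hx2
        have hey : unionEquiv _ _ hd y = Sum.inr c' := by
          obtain ⟨y1, hy2⟩ := y
          obtain ⟨c1, hc2⟩ := c'
          simp only at hy
          subst hy
          exact unionEquiv_inr _ _ hd y1 hc2 hy2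
        rw [subm_union_eq L _ _ hd, Matrix.inv_submatrix_equiv, Matrix.submatrix_apply,
          hex, hey, ← invOf_eq_nonsing_inv, Matrix.invOf_fromBlocks₁₁_eq,
          Matrix.fromBlocks_apply₂₂]
        rw [show ⅟(subm L (Ci k) (Ci k)
            - subm L (Ci k) ((Finset.range k).biUnion Ci)
              * ⅟(subm L ((Finset.range k).biUnion Ci) ((Finset.range k).biUnion Ci))
              * subm L ((Finset.range k).biUnion Ci) (Ci k))
          = (subm2 (Lt k) (hCi k))⁻¹ by rw [invOf_eq_nonsing_inv, hS']]
        rfl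
  -- assemble
  have hsup : ∀ i, i < m →
      ((Y i).powerset.attach.sup'
        (Finset.attach_nonempty_iff.mpr ((Y i).powerset_nonempty))
        (fun S => (subm2 (Lt i) (Finset.mem_powerset.mp S.2)).det))
      = (subm2 (Lt i) (hCi i)).det := by
    intro i him
    apply le_antisymm
    · exact Finset.sup'_le _ _ (fun S _ => hmax i him S.1 (Finset.mem_powerset.mp S.2))
    · exact Finset.le_sup'
        (f := fun (S : ↥(Y i).powerset) => (subm2 (Lt i) (Finset.mem_powerset.mp S.2)).det)
        (Finset.mem_attach _ ⟨Ci i, Finset.mem_powerset.mpr (hCi i)⟩)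
  rw [(key m le_rfl).1]
  exact (Finset.prod_congr rfl (fun i hi => (hsup i (Finset.mem_range.mp hi)).symm))
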